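/- Let M be a finitely generated C-module (C infinite cyclic, generated by t) such that M ⊗ ℚ is finite-dimensional, and set V = M ⊗ ℚ. Then the natural map of exterior powers Λ^n(V) → Λ^n(V̂_I) induced by the I-adic completion map V → V̂_I is a split surjection of C-modules for every n, where I is the augmentation ideal of ℚ[C]. -/

import Mathlib

open CategoryTheory

/-- The infinite cyclic group `C`. -/
abbrev CInf : Type := Multiplicative ℤ

/-- The rational group ring `ℚ[C]`. -/
abbrev QC : Type := MonoidAlgebra ℚ CInf

/-- The augmentation ideal `I = Ker(ℚ[C] → ℚ)`. -/
noncomputable def augIdeal : Ideal QC :=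
  RingHom.ker ((MonoidAlgebra.lift ℚ ℚ CInf) 1).toRingHom

/-- The generator `t` of `C` inside `ℚ[C]`. -/
noncomputable def tQC : QC := MonoidAlgebra.of ℚ CInf (Multiplicative.ofAdd (1 : ℤ))

/-- Any `ℚ[C]`-module is a `ℚ`-vector space by restriction of scalars. -/
noncomputable def modQ (W : Type) [AddCommGroup W] [Module QC W] : Module ℚ W :=
  Module.compHom W (algebraMap ℚ QC)

attribute [local instance] modQ

section
variable (W : Type) [AddCommGroup W] [Module QC W]

/-- The action of the generator `t` of `C` as a `ℚ`-linear endomorphism. -/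
noncomputable def tAct : W →ₗ[ℚ] W where
  toFun w := tQC • w
  map_add' a b := smul_add tQC a b
  map_smul' q w := by
    show tQC • ((algebraMap ℚ QC q) • w) = (algebraMap ℚ QC q) • (tQC • w)
    rw [← mul_smul, mul_comm, mul_smul]

end

/-- The `ℚ`-linear map on `n`-th exterior powers induced by a linear map. -/
noncomputable def extPowerMap {W W' : Type} [AddCommGroup W] [Module ℚ W] [AddCommGroup W']
    [Module ℚ W'] (n : ℕ) (f : W →ₗ[ℚ] W') : ⋀[ℚ]^n W →ₗ[ℚ] ⋀[ℚ]^n W' :=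
  (ExteriorAlgebra.map f).toLinearMap.restrict (p := ⋀[ℚ]^n W) (q := ⋀[ℚ]^n W')
    (by
      intro x hx
      have hle : Submodule.map (ExteriorAlgebra.map f).toLinearMap
          (LinearMap.range (ExteriorAlgebra.ι ℚ (M := W))) ≤
          LinearMap.range (ExteriorAlgebra.ι ℚ (M := W')) := by
        rintro _ ⟨_, ⟨m, rfl⟩, rfl⟩
        exact ⟨f m, (LinearMap.congr_fun (ExteriorAlgebra.map_comp_ι f) m).symm⟩
      have := Submodule.map_pow (M := LinearMap.range (ExteriorAlgebra.ι ℚ (M := W)))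
        (ExteriorAlgebra.map f) n
      have hx' : (ExteriorAlgebra.map f).toLinearMap x ∈
          Submodule.map (ExteriorAlgebra.map f).toLinearMap
            (LinearMap.range (ExteriorAlgebra.ι ℚ (M := W)) ^ n) :=
        Submodule.mem_map_of_mem hx
      rw [this] at hx'
      exact pow_le_pow_left' hle n hx')

section
variable (V : Type) [AddCommGroup V] [Module QC V]

/-- The natural map `V → V̂_I` to the `I`-adic completion, as a `ℚ`-linear map. -/
noncomputable def ofQ : V →ₗ[ℚ] AdicCompletion augIdeal V where
  toFun := AdicCompletion.of augIdeal V
  map_add' a b := map_add _ a b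
  map_smul' q v := map_smul (AdicCompletion.of augIdeal V) (algebraMap ℚ QC q) v

end

/-! ### Auxiliary results on the augmentation ideal -/

/-- The augmentation homomorphism, as an algebra map. -/
noncomputable def augHom : QC →ₐ[ℚ] ℚ := (MonoidAlgebra.lift ℚ ℚ CInf) 1

lemma augHom_of (g : CInf) : augHom (MonoidAlgebra.of ℚ CInf g) = 1 := by
  simp [augHom, MonoidAlgebra.lift_of]

lemma mem_augIdeal_iff (f : QC) : f ∈ augIdeal ↔ augHom f = 0 := by
  simp [augIdeal, augHom, RingHom.mem_ker]

lemma tQC_mul_tinv : tQC * MonoidAlgebra.of ℚ CInf (Multiplicative.ofAdd (-1 : ℤ)) = 1 := by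
  rw [tQC, ← map_mul, ← ofAdd_add, show ((1:ℤ) + (-1)) = 0 by norm_num, ofAdd_zero, map_one]

lemma of_sub_one_mem (k : ℤ) :
    MonoidAlgebra.of ℚ CInf (Multiplicative.ofAdd k) - 1 ∈ Ideal.span {tQC - 1} := by
  induction k using Int.induction_on with
  | zero => rw [ofAdd_zero, map_one, sub_self]; exact zero_mem _
  | succ i ih =>
    have hmul : MonoidAlgebra.of ℚ CInf (Multiplicative.ofAdd ((i : ℤ) + 1))
        = tQC * MonoidAlgebra.of ℚ CInf (Multiplicative.ofAdd (i : ℤ)) := by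
      rw [tQC, ← map_mul, ← ofAdd_add]; ring_nf
    have key : MonoidAlgebra.of ℚ CInf (Multiplicative.ofAdd ((i : ℤ) + 1)) - 1
        = tQC * (MonoidAlgebra.of ℚ CInf (Multiplicative.ofAdd (i : ℤ)) - 1) + (tQC - 1) := by
      rw [hmul]; ring
    rw [key]
    exact Ideal.add_mem _ (Ideal.mul_mem_left _ _ ih) (Ideal.subset_span rfl)
  | pred i ih =>
    set u : QC := MonoidAlgebra.of ℚ CInf (Multiplicative.ofAdd (-1 : ℤ)) with hu
    have hut : tQC * u = 1 := tQC_mul_tinv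
    have hmul : MonoidAlgebra.of ℚ CInf (Multiplicative.ofAdd (-(i : ℤ) - 1))
        = u * MonoidAlgebra.of ℚ CInf (Multiplicative.ofAdd (-(i : ℤ))) := by
      rw [hu, ← map_mul, ← ofAdd_add]; ring_nf
    have hum : u - 1 ∈ Ideal.span {tQC - 1} := by
      have h : u - 1 = (-u) * (tQC - 1) := by linear_combination hut
      rw [h]
      exact Ideal.mul_mem_left _ _ (Ideal.subset_span rfl)
    have key : MonoidAlgebra.of ℚ CInf (Multiplicative.ofAdd (-(i : ℤ) - 1)) - 1
        = u * (MonoidAlgebra.of ℚ CInf (Multiplicative.ofAdd (-(i : ℤ))) - 1) + (u - 1) := by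
      rw [hmul]; ring
    rw [key]
    exact Ideal.add_mem _ (Ideal.mul_mem_left _ _ ih) hum

lemma augIdeal_eq_span : augIdeal = Ideal.span {tQC - 1} := by
  apply le_antisymm
  · intro f hf
    have key : ∀ f : QC, f - algebraMap ℚ QC (augHom f) ∈ Ideal.span {tQC - 1} := by
      intro f
      induction f using MonoidAlgebra.induction_on with
      | of g =>
        rw [augHom_of, map_one]
        simpa using of_sub_one_mem (Multiplicative.toAdd g)
      | add f g hf hg =>
        have h : (f + g) - algebraMap ℚ QC (augHom (f + g))
            = (f - algebraMap ℚ QC (augHom f)) + (g - algebraMap ℚ QC (augHom g)) := by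
          rw [map_add, map_add]; ring
        rw [h]; exact Ideal.add_mem _ hf hg
      | smul r f hf =>
        have h : (r • f) - algebraMap ℚ QC (augHom (r • f))
            = algebraMap ℚ QC r * (f - algebraMap ℚ QC (augHom f)) := by
          rw [map_smul, smul_eq_mul, map_mul, Algebra.smul_def]; ring
        rw [h]; exact Ideal.mul_mem_left _ _ hf
    have hf0 : augHom f = 0 := (mem_augIdeal_iff f).mp hf
    have := key f
    rwa [hf0, map_zero, sub_zero] at this
  · rw [Ideal.span_le, Set.singleton_subset_iff]
    rw [SetLike.mem_coe, mem_augIdeal_iff, map_sub, map_one, tQC, augHom_of, sub_self]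

/-! ### The endomorphism `t - 1` and powers of the augmentation ideal -/

section Tau

variable (V : Type) [AddCommGroup V] [Module QC V]

/-- The endomorphism `t - 1`. -/
noncomputable def tauV : V →ₗ[ℚ] V := tAct V - LinearMap.id

lemma smul_tsub_one (v : V) : (tQC - 1) • v = tauV V v := by
  show (tQC - 1) • v = tAct V v - LinearMap.id v
  rw [sub_smul, one_smul]
  rfl

lemma smul_tsub_one_pow (i : ℕ) (v : V) : ((tQC - 1) ^ i) • v = ((tauV V) ^ i) v := by
  induction i generalizing v with
  | zero => rw [pow_zero, one_smul, pow_zero, Module.End.one_apply]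
  | succ i ih =>
    rw [pow_succ, mul_smul, smul_tsub_one, ih (tauV V v), pow_succ, Module.End.mul_apply]

open Pointwise in
lemma mem_pow_smul_top_iff (i : ℕ) (v : V) :
    v ∈ (augIdeal ^ i • ⊤ : Submodule QC V) ↔ v ∈ LinearMap.range ((tauV V) ^ i) := by
  rw [augIdeal_eq_span, Ideal.span_singleton_pow, Submodule.ideal_span_singleton_smul]
  constructor
  · intro h
    have h' : v ∈ ((tQC - 1) ^ i • ((⊤ : Submodule QC V) : Set V)) := by
      rw [← Submodule.coe_pointwise_smul]; exact h
    obtain ⟨w, -, hw⟩ := Set.mem_smul_set.mp h'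
    exact ⟨w, by rw [← smul_tsub_one_pow]; exact hw⟩
  · rintro ⟨w, rfl⟩
    rw [← smul_tsub_one_pow]
    exact Submodule.smul_mem_pointwise_smul w _ ⊤ trivial

lemma tAct_comm_tauV_pow (i : ℕ) (v : V) :
    tAct V (((tauV V) ^ i) v) = ((tauV V) ^ i) (tAct V v) := by
  induction i generalizing v with
  | zero => rw [pow_zero, Module.End.one_apply, Module.End.one_apply]
  | succ i ih =>
    have hbase : tAct V (tauV V v) = tauV V (tAct V v) := by
      show tAct V (tAct V v - LinearMap.id v) = tAct V (tAct V v) - LinearMap.id (tAct V v)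
      rw [map_sub]
      rfl
    rw [pow_succ, Module.End.mul_apply, Module.End.mul_apply, ih (tauV V v), hbase]

end Tau

/-! ### The section of the completion map -/

lemma exists_section (V : Type) [AddCommGroup V] [Module QC V] [FiniteDimensional ℚ V] :
    ∃ p : AdicCompletion augIdeal V →ₗ[ℚ] V,
      (ofQ V) ∘ₗ p = LinearMap.id ∧
      p ∘ₗ (tAct (AdicCompletion augIdeal V)) = (tAct V) ∘ₗ p := by
  classical
  set N := Module.finrank ℚ V with hNdef
  set τ : V →ₗ[ℚ] V := tauV V with hτ
  set K : Submodule ℚ V := LinearMap.ker (τ ^ N) with hK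
  set R : Submodule ℚ V := LinearMap.range (τ ^ N) with hR
  have hker : ∀ i, N ≤ i → LinearMap.ker (τ ^ i) = K := fun i hi =>
    Module.End.ker_pow_eq_ker_pow_finrank_of_le hi
  have hrange_le : ∀ i j : ℕ, i ≤ j → LinearMap.range (τ ^ j) ≤ LinearMap.range (τ ^ i) := by
    intro i j hij
    rw [← Nat.add_sub_cancel' hij, pow_add, Module.End.mul_eq_comp]
    exact LinearMap.range_comp_le_range _ _
  have hrange : ∀ i, N ≤ i → LinearMap.range (τ ^ i) = R := by
    intro i hi
    apply Submodule.eq_of_le_of_finrank_le (hrange_le N i hi)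
    have h1 := LinearMap.finrank_range_add_finrank_ker (τ ^ i)
    have h2 := LinearMap.finrank_range_add_finrank_ker (τ ^ N)
    rw [hker i hi] at h1
    have hfk : Module.finrank ℚ K = Module.finrank ℚ (LinearMap.ker (τ ^ N)) := rfl
    have hfr : Module.finrank ℚ R = Module.finrank ℚ (LinearMap.range (τ ^ N)) := rfl
    omega
  have hdisj : Disjoint K R := by
    rw [Submodule.disjoint_def]
    intro x hxK hxR
    obtain ⟨y, rfl⟩ := hxR
    have hxK' : (τ ^ N) ((τ ^ N) y) = 0 := hxK
    have hy : y ∈ LinearMap.ker (τ ^ (N + N)) := by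
      rw [LinearMap.mem_ker, pow_add, Module.End.mul_apply]
      exact hxK'
    rw [hker (N + N) (Nat.le_add_right N N)] at hy
    exact hy
  have hcompl : IsCompl K R := by
    refine ⟨hdisj, codisjoint_iff.mpr ?_⟩
    apply Submodule.eq_top_of_disjoint K R ?_ hdisj
    have h2 := LinearMap.finrank_range_add_finrank_ker (τ ^ N)
    have hfk : Module.finrank ℚ K = Module.finrank ℚ (LinearMap.ker (τ ^ N)) := rfl
    have hfr : Module.finrank ℚ R = Module.finrank ℚ (LinearMap.range (τ ^ N)) := rfl
    omega
  have hKt : ∀ x ∈ K, tAct V x ∈ K := by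
    intro x hx
    rw [hK, LinearMap.mem_ker] at hx ⊢
    rw [hτ, ← tAct_comm_tauV_pow, ← hτ, hx, map_zero]
  set φ : K →ₗ[ℚ] AdicCompletion augIdeal V := (ofQ V) ∘ₗ K.subtype with hφ
  have hφ_apply : ∀ x : K, φ x = AdicCompletion.of augIdeal V (x : V) := fun x => rfl
  have hinj : Function.Injective φ := by
    refine (injective_iff_map_eq_zero _).mpr ?_
    intro x hx0
    have h1 : (AdicCompletion.of augIdeal V (x : V)).val N = 0 := by
      rw [← hφ_apply x, hx0]; rfl
    have h2 : (x : V) ∈ (augIdeal ^ N • ⊤ : Submodule QC V) := by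
      rwa [AdicCompletion.of_apply, Submodule.mkQ_apply, Submodule.Quotient.mk_eq_zero] at h1
    have h3 : (x : V) ∈ R :=
      (mem_pow_smul_top_iff V N (x : V)).mp h2
    have h0 : (x : V) = 0 := (Submodule.disjoint_def.mp hdisj) _ x.2 h3
    exact Subtype.ext h0
  have hsurj : Function.Surjective φ := by
    intro x
    obtain ⟨v, hv⟩ := Submodule.mkQ_surjective _ (x.val N)
    have hvtop : v ∈ K ⊔ R := by rw [hcompl.codisjoint.eq_top]; trivial
    obtain ⟨k, hk, r, hr, hkr⟩ := Submodule.mem_sup.mp hvtop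
    refine ⟨⟨k, hk⟩, ?_⟩
    apply AdicCompletion.ext
    intro i
    show (AdicCompletion.of augIdeal V k).val i = x.val i
    rw [AdicCompletion.of_apply]
    rcases le_or_gt i N with hiN | hNi
    · have ht : AdicCompletion.transitionMap augIdeal V hiN (x.val N)
          = x.val i := AdicCompletion.transitionMap_comp_eval_apply augIdeal V hiN x
      have h5 : ((augIdeal ^ i • ⊤ : Submodule QC V)).mkQ v = x.val i := by
        rw [← ht, ← hv]
        exact (Submodule.factor_mk _ v).symm
      rw [← h5]
      have hmem : k - v ∈ (augIdeal ^ i • ⊤ : Submodule QC V) := by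
        have hkv : k - v = -r := by rw [← hkr]; abel
        rw [hkv]
        apply Submodule.neg_mem
        apply (mem_pow_smul_top_iff V i r).mpr
        exact hrange_le i N hiN hr
      exact (Submodule.Quotient.eq _).mpr hmem
    · have hNi' : N ≤ i := hNi.le
      obtain ⟨w, hw⟩ := Submodule.mkQ_surjective _ (x.val i)
      have ht : AdicCompletion.transitionMap augIdeal V hNi' (x.val i)
          = x.val N := AdicCompletion.transitionMap_comp_eval_apply augIdeal V hNi' x
      have h6 : ((augIdeal ^ N • ⊤ : Submodule QC V)).mkQ w = x.val N := by
        rw [← ht, ← hw]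
        exact (Submodule.factor_mk _ w).symm
      have hvw : v - w ∈ (augIdeal ^ N • ⊤ : Submodule QC V) :=
        (Submodule.Quotient.eq _).mp (hv.trans h6.symm)
      have hri : LinearMap.range (tauV V ^ i) = LinearMap.range (tauV V ^ N) :=
        (hrange i hNi').trans hR
      have hEq : (augIdeal ^ i • ⊤ : Submodule QC V) = (augIdeal ^ N • ⊤ : Submodule QC V) := by
        ext u
        rw [mem_pow_smul_top_iff, mem_pow_smul_top_iff, hri]
      have hkw : k - w ∈ (augIdeal ^ i • ⊤ : Submodule QC V) := by
        have hkv : k - v ∈ (augIdeal ^ i • ⊤ : Submodule QC V) := by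
          have hkv' : k - v = -r := by rw [← hkr]; abel
          rw [hkv']
          apply Submodule.neg_mem
          apply (mem_pow_smul_top_iff V i r).mpr
          rw [hri]
          exact hr
        have hvw' : v - w ∈ (augIdeal ^ i • ⊤ : Submodule QC V) := by rw [hEq]; exact hvw
        have : (k - v) + (v - w) = k - w := by abel
        rw [← this]
        exact Submodule.add_mem _ hkv hvw'
      rw [← hw]
      exact (Submodule.Quotient.eq _).mpr hkw
  set e : K ≃ₗ[ℚ] AdicCompletion augIdeal V := LinearEquiv.ofBijective φ ⟨hinj, hsurj⟩ with he
  have he_apply : ∀ y : K, e y = φ y := fun y => rfl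
  refine ⟨K.subtype ∘ₗ (e.symm : AdicCompletion augIdeal V →ₗ[ℚ] K), ?_, ?_⟩
  · apply LinearMap.ext
    intro x
    show ofQ V ((e.symm x : K) : V) = x
    have h : φ (e.symm x) = x := by
      rw [← he_apply, e.apply_symm_apply]
    exact h
  · apply LinearMap.ext
    intro x
    show (K.subtype (e.symm (tAct (AdicCompletion augIdeal V) x)))
        = tAct V (K.subtype (e.symm x))
    set y : K := e.symm x with hy
    have hx : x = φ y := by rw [← he_apply, hy, e.apply_symm_apply]
    have h1 : tAct (AdicCompletion augIdeal V) x = φ ⟨tAct V (y : V), hKt _ y.2⟩ := by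
      rw [hx, hφ_apply, hφ_apply]
      show tQC • (AdicCompletion.of augIdeal V (y : V))
          = AdicCompletion.of augIdeal V (tQC • (y : V))
      rw [map_smul]
    have h2 : e.symm (tAct (AdicCompletion augIdeal V) x) = ⟨tAct V (y : V), hKt _ y.2⟩ := by
      rw [h1, ← he_apply, e.symm_apply_apply]
    rw [h2]
    rfl

/-! ### Functoriality of exterior powers -/

lemma extPowerMap_comp {W W' W'' : Type} [AddCommGroup W] [Module ℚ W] [AddCommGroup W']
    [Module ℚ W'] [AddCommGroup W''] [Module ℚ W''] (n : ℕ) (f : W' →ₗ[ℚ] W'')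
    (g : W →ₗ[ℚ] W') :
    extPowerMap n (f ∘ₗ g) = (extPowerMap n f) ∘ₗ (extPowerMap n g) := by
  apply LinearMap.ext
  intro x
  apply Subtype.ext
  show (ExteriorAlgebra.map (f ∘ₗ g)) x.1 = (ExteriorAlgebra.map f) ((ExteriorAlgebra.map g) x.1)
  rw [← ExteriorAlgebra.map_comp_map]
  rfl

lemma extPowerMap_id {W : Type} [AddCommGroup W] [Module ℚ W] (n : ℕ) :
    extPowerMap n (LinearMap.id : W →ₗ[ℚ] W) = LinearMap.id := by
  apply LinearMap.ext
  intro x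
  apply Subtype.ext
  show (ExteriorAlgebra.map (LinearMap.id : W →ₗ[ℚ] W)) x.1 = x.1
  rw [ExteriorAlgebra.map_id]
  rfl

/-- let `V` be a `ℚ[C]`-module which is finite dimensional over `ℚ`
(equivalently, `V = M ⊗ ℚ` for a finitely generated `C`-module `M` with `M ⊗ ℚ` finite
dimensional).  Then for every `n` the natural map `Λ^n V → Λ^n (V̂_I)` induced by the
`I`-adic completion `V → V̂_I` is a split surjection of `C`-modules: it admits a
`C`-equivariant `ℚ`-linear section. -/
theorem bousfield_stmt19 (V : Type) [AddCommGroup V] [Module QC V]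
    [FiniteDimensional ℚ V] (n : ℕ) :
    ∃ s : (⋀[ℚ]^n (AdicCompletion augIdeal V)) →ₗ[ℚ] (⋀[ℚ]^n V),
      (extPowerMap n (ofQ V)) ∘ₗ s = LinearMap.id ∧
      s ∘ₗ (extPowerMap n (tAct (AdicCompletion augIdeal V))) =
        (extPowerMap n (tAct V)) ∘ₗ s := by
  obtain ⟨p, hp1, hp2⟩ := exists_section V
  refine ⟨extPowerMap n p, ?_, ?_⟩
  · rw [← extPowerMap_comp, hp1, extPowerMap_id]
  · rw [← extPowerMap_comp, hp2, extPowerMap_comp]
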